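/- Let n be a positive integer, p ≥ 0 a real number, and l, a, b integers with 0 ≤ l ≤ a ≤ b. If Y ~ Poisson(np), then E[(∏_{l'=0}^{l−1}((Y − l')/n) − p^l) · 1_{a ≤ Y ≤ b}] = p^l · Σ_{t=a−l}^{a−1} e^{−np}(np)^t/t! − p^l · Σ_{t=b−l+1}^{b} e^{−np}(np)^t/t!. -/

import Mathlib

open scoped BigOperators

/-- The Poisson probability mass function with mean `μ`: `Pr(Y = t) = e^{-μ} μ^t / t!`. -/
noncomputable def poissonPMF (μ : ℝ) (t : ℕ) : ℝ := Real.exp (-μ) * μ ^ t / t.factorial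

lemma prod_range_cast_sub (t l : ℕ) (h : l ≤ t) :
    ∏ i ∈ Finset.range l, ((t : ℝ) - i) = t.descFactorial l := by
  induction l with
  | zero => simp
  | succ k ih =>
    rw [Finset.prod_range_succ, ih (Nat.le_of_succ_le h), Nat.descFactorial_succ]
    have hk : k ≤ t := Nat.le_of_succ_le h
    push_cast [Nat.cast_sub hk]
    ring

lemma key_pmf (n : ℕ) (hn : 0 < n) (p : ℝ) (t l : ℕ) (h : l ≤ t) :
    poissonPMF (n * p) t * ∏ i ∈ Finset.range l, (((t : ℝ) - i) / n)
      = p ^ l * poissonPMF (n * p) (t - l) := by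
  have hn' : (n : ℝ) ≠ 0 := Nat.cast_ne_zero.mpr hn.ne'
  rw [Finset.prod_div_distrib, Finset.prod_const, Finset.card_range, prod_range_cast_sub t l h]
  have hfac : ((t - l).factorial : ℝ) * (t.descFactorial l : ℝ) = t.factorial := by
    exact_mod_cast congrArg (Nat.cast (R := ℝ)) (Nat.factorial_mul_descFactorial h)
  have hmu : ((n : ℝ) * p) ^ t = ((n : ℝ) * p) ^ (t - l) * ((n : ℝ) * p) ^ l := by
    rw [← pow_add, Nat.sub_add_cancel h]
  unfold poissonPMF
  have h1 : (t.factorial : ℝ) ≠ 0 := Nat.cast_ne_zero.mpr t.factorial_ne_zero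
  have h2 : ((t - l).factorial : ℝ) ≠ 0 := Nat.cast_ne_zero.mpr (t - l).factorial_ne_zero
  rw [hmu]
  field_simp
  rw [← hfac]
  ring

/-- If `Y ~ Poisson(np)` and `0 ≤ l ≤ a ≤ b`, then
`E[(Π_{l'=0}^{l-1}((Y - l')/n) - p^l) 1_{a ≤ Y ≤ b}]
  = p^l Σ_{t=a-l}^{a-1} e^{-np}(np)^t/t! - p^l Σ_{t=b-l+1}^{b} e^{-np}(np)^t/t!`. -/
theorem expectation_falling_indicator (n : ℕ) (hn : 0 < n) (p : ℝ) (hp : 0 ≤ p)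
    (l a b : ℕ) (hla : l ≤ a) (hab : a ≤ b) :
    ∑' t : ℕ, poissonPMF (n * p) t *
        ((∏ l' ∈ Finset.range l, (((t : ℝ) - l') / n)) - p ^ l) *
        (if a ≤ t ∧ t ≤ b then (1 : ℝ) else 0)
      = p ^ l * (∑ t ∈ Finset.Ico (a - l) a, poissonPMF (n * p) t)
        - p ^ l * (∑ t ∈ Finset.Icc (b - l + 1) b, poissonPMF (n * p) t) := by
  classical
  set f : ℕ → ℝ := fun t => poissonPMF (n * p) t *
        ((∏ l' ∈ Finset.range l, (((t : ℝ) - l') / n)) - p ^ l) *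
        (if a ≤ t ∧ t ≤ b then (1 : ℝ) else 0)
  have hsupp : ∀ t ∉ Finset.Icc a b, f t = 0 := by
    intro t ht
    simp only [Finset.mem_Icc, not_and_or, not_le] at ht
    have : ¬ (a ≤ t ∧ t ≤ b) := by omega
    simp [f, this]
  rw [tsum_eq_sum hsupp]
  have hstep : ∀ t ∈ Finset.Icc a b,
      f t = p ^ l * poissonPMF (n * p) (t - l) - p ^ l * poissonPMF (n * p) t := by
    intro t ht
    simp only [Finset.mem_Icc] at ht
    have h1 : a ≤ t ∧ t ≤ b := ht
    have hlt : l ≤ t := le_trans hla ht.1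
    simp only [f, if_pos h1, mul_one, mul_sub]
    rw [key_pmf n hn p t l hlt]
    ring
  rw [Finset.sum_congr rfl hstep, Finset.sum_sub_distrib,
    ← Finset.mul_sum, ← Finset.mul_sum]
  have hre : ∑ t ∈ Finset.Icc a b, poissonPMF (n * p) (t - l)
      = ∑ s ∈ Finset.Icc (a - l) (b - l), poissonPMF (n * p) s := by
    apply Finset.sum_nbij' (fun t => t - l) (fun s => s + l)
    · intro t ht; simp only [Finset.mem_Icc] at *; omega
    · intro s hs; simp only [Finset.mem_Icc] at *; omega
    · intro t ht; simp only [Finset.mem_Icc] at ht; omega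
    · intro s hs; omega
    · intro t ht; rfl
  rw [hre]
  -- telescoping over intervals
  have hIco : ∀ x y : ℕ, Finset.Icc x y = Finset.Ico x (y + 1) := fun x y =>
    (Finset.Ico_add_one_right_eq_Icc x y).symm
  have key : ∑ s ∈ Finset.Icc (a - l) (b - l), poissonPMF (n * p) s
        + ∑ t ∈ Finset.Icc (b - l + 1) b, poissonPMF (n * p) t
      = ∑ t ∈ Finset.Ico (a - l) a, poissonPMF (n * p) t
        + ∑ t ∈ Finset.Icc a b, poissonPMF (n * p) t := by
    rw [hIco (a - l) (b - l), hIco (b - l + 1) b, hIco a b]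
    rw [Finset.sum_Ico_consecutive _ (by omega) (by omega),
      Finset.sum_Ico_consecutive _ (by omega) (by omega)]
  linear_combination p ^ l * key
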